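/- Let φ : H → G be a group homomorphism whose range φ(H) is a proper subgroup of G that is either of finite index in G or normal in G. Then the induced map on conjugacy classes conj(H) → conj(G) is not surjective; that is, there is a conjugacy class of G containing no element of the form g·φ(h)·g⁻¹. -/

import Mathlib

open MulAction in
/-- **Jordan's theorem**: a finite group is not the union of conjugates of a proper subgroup. -/
lemma jordan_exists_not_mem_conj {M : Type*} [Group M] [Finite M] (K : Subgroup M)
    (hK : K ≠ ⊤) : ∃ m : M, ∀ x : M, x * m * x⁻¹ ∉ K := by
  classical
  have := Fintype.ofFinite M
  have := Fintype.ofFinite (M ⧸ K)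
  by_contra hcon
  push_neg at hcon
  -- every element has a fixed point on M ⧸ K
  have hfix : ∀ m : M, ∃ q : M ⧸ K, m • q = q := by
    intro m
    obtain ⟨x, hx⟩ := hcon m⁻¹
    refine ⟨QuotientGroup.mk x⁻¹, ?_⟩
    rw [MulAction.Quotient.smul_mk, QuotientGroup.eq]
    simpa [mul_assoc] using hx
  have hΩ : Fintype.card (orbitRel.Quotient M (M ⧸ K)) = 1 := by
    have h1 : Subsingleton (orbitRel.Quotient M (M ⧸ K)) :=
      (pretransitive_iff_subsingleton_quotient M (M ⧸ K)).mp inferInstance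
    have h2 : Nonempty (orbitRel.Quotient M (M ⧸ K)) := inferInstance
    obtain ⟨x⟩ := h2
    exact Fintype.card_eq_one_iff.mpr ⟨x, fun y => Subsingleton.elim y x⟩
  have hburn := MulAction.sum_card_fixedBy_eq_card_orbits_mul_card_group M (M ⧸ K)
  rw [hΩ, one_mul] at hburn
  -- card of fixed points of 1 is card (M ⧸ K) ≥ 2
  have h1 : Fintype.card (fixedBy (M ⧸ K) (1 : M)) = Fintype.card (M ⧸ K) := by
    apply Fintype.card_congr
    apply Equiv.subtypeUnivEquiv
    intro q
    simp [mem_fixedBy]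
  have hnt : Nontrivial (M ⧸ K) := by
    obtain ⟨g, hg⟩ : ∃ g : M, g ∉ K := by
      by_contra h
      push_neg at h
      exact hK ((Subgroup.eq_top_iff' _).mpr h)
    refine ⟨QuotientGroup.mk g, QuotientGroup.mk 1, fun h => hg ?_⟩
    rw [QuotientGroup.eq] at h
    simpa using h
  have h2 : 2 ≤ Fintype.card (M ⧸ K) := Fintype.one_lt_card
  have hpos : ∀ m : M, 1 ≤ Fintype.card (fixedBy (M ⧸ K) m) := by
    intro m
    obtain ⟨q, hq⟩ := hfix m
    exact Fintype.card_pos_iff.mpr ⟨⟨q, hq⟩⟩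
  have hsplit : Fintype.card (fixedBy (M ⧸ K) (1 : M)) +
      ∑ m ∈ Finset.univ.erase (1 : M), Fintype.card (fixedBy (M ⧸ K) m) =
      ∑ m : M, Fintype.card (fixedBy (M ⧸ K) m) :=
    Finset.add_sum_erase Finset.univ
      (fun m : M => Fintype.card (fixedBy (M ⧸ K) m)) (Finset.mem_univ (1 : M))
  have hbound : (Finset.univ.erase (1 : M)).card ≤
      ∑ m ∈ Finset.univ.erase (1 : M), Fintype.card (fixedBy (M ⧸ K) m) := by
    have := Finset.card_nsmul_le_sum (Finset.univ.erase (1 : M))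
      (fun m => Fintype.card (fixedBy (M ⧸ K) m)) 1 (fun m _ => hpos m)
    simpa using this
  have hcard : (Finset.univ.erase (1 : M)).card = Fintype.card M - 1 := by
    rw [Finset.card_erase_of_mem (Finset.mem_univ _), Finset.card_univ]
  have hMpos : 1 ≤ Fintype.card M := Fintype.card_pos
  omega

/-- Let `φ : H →* G` be a group homomorphism whose range is a proper subgroup
of `G` that is either of finite index in `G` or normal in `G`. Then the induced map on conjugacy
classes `conj(H) → conj(G)` is not surjective. -/
theorem conjClasses_map_not_surjective {H G : Type*} [Group H] [Group G] (φ : H →* G)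
    (hne : φ.range ≠ ⊤) (hfin_or_norm : Finite (G ⧸ φ.range) ∨ φ.range.Normal) :
    ¬ Function.Surjective (ConjClasses.map φ) := by
  -- It suffices to find g whose conjugates all avoid φ.range
  obtain ⟨g, hg⟩ : ∃ g : G, ∀ x : G, x * g * x⁻¹ ∉ φ.range := by
    rcases hfin_or_norm with hfin | hnorm
    · -- finite index case: pass to the quotient by the normal core
      set K := φ.range with hKdef
      have hfinK : Finite (G ⧸ K) := hfin
      have hFI : K.FiniteIndex := Subgroup.finiteIndex_of_finite_quotient
      set N := K.normalCore with hNdef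
      have hNnorm : N.Normal := Subgroup.normalCore_normal K
      have hNFI : N.FiniteIndex := @Subgroup.finiteIndex_normalCore _ _ K hFI
      have hfinN : Finite (G ⧸ N) := @Subgroup.finite_quotient_of_finiteIndex _ _ N hNFI
      set Kbar := K.map (QuotientGroup.mk' N) with hKbar
      have hcomap : Kbar.comap (QuotientGroup.mk' N) = K := by
        rw [hKbar, Subgroup.comap_map_eq, QuotientGroup.ker_mk',
          sup_eq_left.mpr (Subgroup.normalCore_le K)]
      have hKbar_ne : Kbar ≠ ⊤ := by
        intro h
        apply hne
        rw [← hcomap, h, Subgroup.comap_top]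
      obtain ⟨m, hm⟩ := jordan_exists_not_mem_conj Kbar hKbar_ne
      obtain ⟨g, hg⟩ := QuotientGroup.mk'_surjective N m
      refine ⟨g, fun x hx => hm (QuotientGroup.mk' N x) ?_⟩
      have : QuotientGroup.mk' N (x * g * x⁻¹) ∈ Kbar := by
        rw [hKbar]
        exact Subgroup.mem_map_of_mem _ hx
      simp only [map_mul, map_inv, hg] at this; exact this
    · -- normal case: any g outside the range works
      obtain ⟨g, hg⟩ : ∃ g : G, g ∉ φ.range := by
        by_contra h
        push_neg at h
        exact hne ((Subgroup.eq_top_iff' _).mpr h)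
      refine ⟨g, fun x hx => hg ?_⟩
      have := hnorm.conj_mem _ hx x⁻¹
      simpa [mul_assoc] using this
  intro hsurj
  obtain ⟨c, hc⟩ := hsurj (ConjClasses.mk g)
  induction c using Quotient.inductionOn with
  | h h =>
    have : ConjClasses.mk (φ h) = ConjClasses.mk g := hc
    rw [ConjClasses.mk_eq_mk_iff_isConj, isConj_iff] at this
    obtain ⟨c, hcg⟩ := this
    exact hg c⁻¹ (by rw [← hcg]; exact ⟨h, by group⟩)
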